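/- Let C be a finite set of candidates and let γ : C ∪ V → ℝ² be a 2-Euclidean embedding of an election (C,V). If a voter v ∈ V is controversial (i.e., there exist candidates a,b ∈ C such that v prefers a over b while every other voter prefers b over a), and no three voters are embedded on a common line, then γ(v) is a vertex of the convex hull of the set γ(V) of embedded voter points. -/

import Mathlib

noncomputable section

open scoped RealInnerProductSpace

abbrev Plane : Type := EuclideanSpace ℝ (Fin 2)

lemma isLinearMap_inner_right' (y : Plane) :
    IsLinearMap ℝ (fun x : Plane => (inner ℝ y x : ℝ)) :=
  ⟨fun a b => inner_add_right y a b, fun c x => real_inner_smul_right y x c⟩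

lemma halfspace_convex (A B : Plane) :
    Convex ℝ {x : Plane | dist x B < dist x A} := by
  have h : {x : Plane | dist x B < dist x A}
      = {x : Plane | (inner ℝ (A - B) x : ℝ) < (‖A‖^2 - ‖B‖^2)/2} := by
    ext x
    simp only [Set.mem_setOf_eq, dist_eq_norm]
    rw [← Real.sqrt_sq (norm_nonneg (x - B)), ← Real.sqrt_sq (norm_nonneg (x - A)),
      Real.sqrt_lt_sqrt_iff (by positivity)]
    have h1 : ‖x - B‖^2 = ‖x‖^2 - 2*(inner ℝ x B : ℝ) + ‖B‖^2 := norm_sub_sq_real x B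
    have h2 : ‖x - A‖^2 = ‖x‖^2 - 2*(inner ℝ x A : ℝ) + ‖A‖^2 := norm_sub_sq_real x A
    have h3 : (inner ℝ (A - B) x : ℝ) = (inner ℝ x A : ℝ) - (inner ℝ x B : ℝ) := by
      rw [real_inner_comm]; exact inner_sub_right x A B
    constructor <;> intro hlt <;> nlinarith
  rw [h]
  exact convex_halfSpace_lt (isLinearMap_inner_right' (A - B)) _

/-- In a 2-Euclidean embedding with no three voters collinear,
a controversial voter is embedded to a vertex of the convex hull of the voter points,
i.e., its point is not in the convex hull of the other voters' points. -/
theorem stmt_0 {C V : Type*} [Fintype C] [Fintype V]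
    (pref : V → C → C → Prop) (hord : ∀ v : V, IsStrictTotalOrder C (pref v))
    (γ : C ⊕ V → Plane) (hinj : Function.Injective γ)
    (heuc : ∀ (v : V) (a b : C), pref v a b →
      dist (γ (Sum.inr v)) (γ (Sum.inl a)) < dist (γ (Sum.inr v)) (γ (Sum.inl b)))
    (hnocol : ∀ u w z : V, u ≠ w → u ≠ z → w ≠ z →
      ¬ Collinear ℝ ({γ (Sum.inr u), γ (Sum.inr w), γ (Sum.inr z)} : Set Plane))
    (v : V) (a b : C)
    (hv : pref v a b) (hothers : ∀ u : V, u ≠ v → pref u b a) :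
    γ (Sum.inr v) ∉ convexHull ℝ ((fun u : V => γ (Sum.inr u)) '' {u : V | u ≠ v}) := by
  intro hmem
  set A := γ (Sum.inl a)
  set B := γ (Sum.inl b)
  have hsub : ((fun u : V => γ (Sum.inr u)) '' {u : V | u ≠ v})
      ⊆ {x : Plane | dist x B < dist x A} := by
    rintro _ ⟨u, hu, rfl⟩
    exact heuc u b a (hothers u hu)
  have := (convexHull_min hsub (halfspace_convex A B)) hmem
  have hva := heuc v a b hv
  simp only [Set.mem_setOf_eq] at this
  change dist (γ (Sum.inr v)) A < dist (γ (Sum.inr v)) B at hva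
  linarith
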